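/- Let f : [1,∞) → [1,∞) be continuous and increasing such that t ↦ f(t)/√t is decreasing on [1,∞), and assume that a ↦ 1/(a f(a)) is integrable on (t₀,∞) for some t₀ ≥ 1. Then the function t ↦ g(t)/t, where g(t) := (∫_t^∞ da/(a f(a)))^{−1}, is decreasing (antitone) on [t₀,∞). -/

import Mathlib

open Set MeasureTheory

/-- If `f : [1,∞) → [1,∞)` is continuous and increasing with `f(t)/√t` decreasing,
and `a ↦ 1/(a f(a))` is integrable on `(t₀,∞)` for some `t₀ ≥ 1`, then
`t ↦ g(t)/t`, where `g(t) := (∫_t^∞ da/(a f(a)))⁻¹`, is decreasing on `[t₀,∞)`. -/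
theorem g_div_t_antitoneOn
    (f : ℝ → ℝ)
    (hf_cont : ContinuousOn f (Ici 1))
    (hf_mono : MonotoneOn f (Ici 1))
    (hf_range : ∀ t ∈ Ici (1 : ℝ), 1 ≤ f t)
    (hf_dec : AntitoneOn (fun t => f t / Real.sqrt t) (Ici 1))
    (t₀ : ℝ) (ht₀ : 1 ≤ t₀)
    (hint : IntegrableOn (fun a => 1 / (a * f a)) (Ioi t₀)) :
    AntitoneOn (fun t => (∫ a in Ioi t, 1 / (a * f a))⁻¹ / t) (Ici t₀) := by
  intro s hs t ht hst
  simp only [mem_Ici] at hs ht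
  have h1s : (1:ℝ) ≤ s := ht₀.trans hs
  have h1t : (1:ℝ) ≤ t := h1s.trans hst
  have hs0 : (0:ℝ) < s := lt_of_lt_of_le one_pos h1s
  have ht0 : (0:ℝ) < t := lt_of_lt_of_le one_pos h1t
  have hfs : (1:ℝ) ≤ f s := hf_range s h1s
  have hft : (1:ℝ) ≤ f t := hf_range t h1t
  have hus : (0:ℝ) < Real.sqrt s := Real.sqrt_pos.2 hs0
  have hut : (0:ℝ) < Real.sqrt t := Real.sqrt_pos.2 ht0
  set It := ∫ a in Ioi t, 1 / (a * f a) with hIt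
  set Is := ∫ a in Ioi s, 1 / (a * f a) with hIs
  set J := ∫ a in Ioc s t, 1 / (a * f a) with hJ
  have hintt : IntegrableOn (fun a => 1 / (a * f a)) (Ioi t) :=
    hint.mono_set (Ioi_subset_Ioi (hs.trans hst))
  have hints : IntegrableOn (fun a => 1 / (a * f a)) (Ioi s) :=
    hint.mono_set (Ioi_subset_Ioi hs)
  have hintJ : IntegrableOn (fun a => 1 / (a * f a)) (Ioc s t) :=
    hints.mono_set Ioc_subset_Ioi_self
  -- rpow helper
  have hrpow : ∀ a : ℝ, 0 < a → a ^ ((-(3:ℝ)/2) : ℝ) = (a * Real.sqrt a)⁻¹ := by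
    intro a ha
    rw [show ((-(3:ℝ)/2) : ℝ) = -(1 + 1/2) by norm_num, Real.rpow_neg ha.le,
      Real.rpow_add ha, Real.rpow_one, Real.sqrt_eq_rpow]
  -- (A) : 2 / f t ≤ It
  have hA : 2 / f t ≤ It := by
    have hptw : ∀ a ∈ Ioi t, Real.sqrt t / f t * a ^ ((-(3:ℝ)/2) : ℝ) ≤ 1 / (a * f a) := by
      intro a ha
      rw [mem_Ioi] at ha
      have ha0 : (0:ℝ) < a := ht0.trans ha
      have h1a : (1:ℝ) ≤ a := h1t.trans ha.le
      have hfa : (1:ℝ) ≤ f a := hf_range a h1a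
      have hua : (0:ℝ) < Real.sqrt a := Real.sqrt_pos.2 ha0
      have hdec := hf_dec h1t h1a ha.le
      have hcross : f a * Real.sqrt t ≤ f t * Real.sqrt a :=
        (div_le_div_iff₀ hua hut).1 hdec
      rw [hrpow a ha0]
      have heq : Real.sqrt t / f t * (a * Real.sqrt a)⁻¹
          = Real.sqrt t / (f t * (a * Real.sqrt a)) := by ring
      rw [heq, div_le_div_iff₀ (by positivity) (by positivity)]
      nlinarith [mul_le_mul_of_nonneg_left hcross ha0.le]
    have hintr : IntegrableOn (fun a => Real.sqrt t / f t * a ^ ((-(3:ℝ)/2) : ℝ)) (Ioi t) :=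
      (integrableOn_Ioi_rpow_of_lt (by norm_num) ht0).const_mul _
    have hmono := setIntegral_mono_on hintr hintt measurableSet_Ioi hptw
    have hcalc : ∫ a in Ioi t, Real.sqrt t / f t * a ^ ((-(3:ℝ)/2) : ℝ) = 2 / f t := by
      rw [integral_const_mul, integral_Ioi_rpow_of_lt (by norm_num) ht0]
      rw [show ((-(3:ℝ)/2) + 1 : ℝ) = -(1/2) by norm_num, Real.rpow_neg ht0.le,
        ← Real.sqrt_eq_rpow]
      field_simp
    linarith [hmono, hcalc.symm.le]
  have hItpos : 0 < It := lt_of_lt_of_le (by positivity) hA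
  have hJnn : 0 ≤ J := by
    apply setIntegral_nonneg measurableSet_Ioc
    intro a ha
    have h1a : (1:ℝ) ≤ a := h1s.trans ha.1.le
    have hfa := hf_range a h1a
    positivity
  -- split
  have hsplit : Is = J + It := by
    rw [hIs, hJ, hIt, ← setIntegral_union (Ioc_disjoint_Ioi le_rfl) measurableSet_Ioi
      hintJ hintt, Ioc_union_Ioi_eq_Ioi hst]
  have hIspos : 0 < Is := by rw [hsplit]; linarith
  -- (B) : J ≤ log (t/s) / f s
  have hB : J ≤ Real.log (t / s) / f s := by
    have hptw : ∀ a ∈ Ioc s t, 1 / (a * f a) ≤ (f s)⁻¹ * (1 / a) := by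
      intro a ha
      have ha0 : (0:ℝ) < a := hs0.trans ha.1
      have h1a : (1:ℝ) ≤ a := h1s.trans ha.1.le
      have hfa : f s ≤ f a := hf_mono h1s h1a ha.1.le
      rw [one_div, mul_inv, mul_comm, one_div]
      exact mul_le_mul_of_nonneg_right (inv_anti₀ (by linarith) hfa)
        (inv_nonneg.2 ha0.le)
    have hone : IntervalIntegrable (fun a : ℝ => 1 / a) volume s t := by
      apply intervalIntegral.intervalIntegrable_one_div
      · intro x hx
        rw [uIcc_of_le hst] at hx
        exact ne_of_gt (lt_of_lt_of_le hs0 hx.1)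
      · exact continuousOn_id
    have hintr : IntegrableOn (fun a : ℝ => (f s)⁻¹ * (1 / a)) (Ioc s t) :=
      hone.1.const_mul _
    have hmono := setIntegral_mono_on hintJ hintr measurableSet_Ioc hptw
    have hcalc : ∫ a in Ioc s t, (f s)⁻¹ * (1 / a) = Real.log (t / s) / f s := by
      rw [integral_const_mul, ← intervalIntegral.integral_of_le hst,
        integral_one_div (by rw [uIcc_of_le hst]; intro h; exact absurd h.1 (not_le.2 hs0))]
      exact (div_eq_inv_mul _ _).symm
    linarith [hmono, hcalc.le]
  -- arithmetic
  have hcross : f t * Real.sqrt s ≤ f s * Real.sqrt t :=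
    (div_le_div_iff₀ hut hus).1 (hf_dec h1s h1t hst)
  have hlognn : 0 ≤ Real.log (t / s) := Real.log_nonneg (by rw [le_div_iff₀ hs0]; linarith)
  have hss : Real.sqrt s * Real.sqrt s = s := Real.mul_self_sqrt hs0.le
  have htt : Real.sqrt t * Real.sqrt t = t := Real.mul_self_sqrt ht0.le
  have hlog : Real.log (t / s) ≤ 2 * (Real.sqrt t / Real.sqrt s - Real.sqrt s / Real.sqrt t) := by
    have hz : (0:ℝ) < Real.sqrt t / Real.sqrt s := by positivity
    have h1 : Real.log (Real.sqrt t / Real.sqrt s) ≤ Real.sqrt t / Real.sqrt s - 1 :=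
      Real.log_le_sub_one_of_pos hz
    have h2 : t / s = (Real.sqrt t / Real.sqrt s) ^ 2 := by
      rw [div_pow, Real.sq_sqrt ht0.le, Real.sq_sqrt hs0.le]
    have hsub : Real.sqrt s / Real.sqrt t ≤ 1 := by
      rw [div_le_one hut]; exact Real.sqrt_le_sqrt hst
    rw [h2, Real.log_pow]
    push_cast
    linarith
  have hlog2 : Real.log (t / s) * (Real.sqrt s * Real.sqrt t) ≤ 2 * (t - s) := by
    have h := mul_le_mul_of_nonneg_right hlog
      (mul_nonneg hus.le hut.le : (0:ℝ) ≤ Real.sqrt s * Real.sqrt t)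
    calc Real.log (t / s) * (Real.sqrt s * Real.sqrt t)
        ≤ 2 * (Real.sqrt t / Real.sqrt s - Real.sqrt s / Real.sqrt t)
            * (Real.sqrt s * Real.sqrt t) := h
      _ = 2 * (t - s) := by rw [← hss, ← htt]; field_simp; rw [Real.sqrt_sq hut.le, Real.sqrt_sq hus.le]
  have hmid : s * (Real.log (t / s) / f s) ≤ (t - s) * (2 / f t) := by
    have hfs0 : (0:ℝ) < f s := by linarith
    have hft0 : (0:ℝ) < f t := by linarith
    rw [mul_div_assoc', mul_div_assoc', div_le_div_iff₀ hfs0 hft0]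
    calc s * Real.log (t / s) * f t
        = (Real.sqrt s * Real.log (t / s)) * (f t * Real.sqrt s) := by
          linear_combination Real.log (t / s) * f t * hss.symm
      _ ≤ (Real.sqrt s * Real.log (t / s)) * (f s * Real.sqrt t) :=
          mul_le_mul_of_nonneg_left hcross (mul_nonneg hus.le hlognn)
      _ = (Real.log (t / s) * (Real.sqrt s * Real.sqrt t)) * f s := by ring
      _ ≤ (2 * (t - s)) * f s := mul_le_mul_of_nonneg_right hlog2 hfs0.le
      _ = (t - s) * 2 * f s := by ring
  have hkey : s * Is ≤ t * It := by
    have h1 : s * J ≤ (t - s) * It := by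
      calc s * J ≤ s * (Real.log (t / s) / f s) := mul_le_mul_of_nonneg_left hB hs0.le
        _ ≤ (t - s) * (2 / f t) := hmid
        _ ≤ (t - s) * It := mul_le_mul_of_nonneg_left hA (by linarith)
    rw [hsplit, mul_add]
    nlinarith [h1]
  show It⁻¹ / t ≤ Is⁻¹ / s
  rw [div_eq_mul_inv, div_eq_mul_inv, ← mul_inv, ← mul_inv, mul_comm It, mul_comm Is]
  exact inv_anti₀ (by positivity) hkey
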